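/- Let n ≥ 2, let A^{(1)},…,A^{(m)} be real symmetric n×n matrices, and define f(Q) := Σ_{ℓ=1}^m Σ_{j=1}^n ((Qᵀ A^{(ℓ)} Q)_{jj})². Let ε > 0, let Q ∈ SO(n), let 1 ≤ i < j ≤ n satisfy |⟨ProjGrad f(Q), Q δ_{i,j}⟩| ≥ ε ‖ProjGrad f(Q)‖, let θ* ∈ [−π/4, π/4] be a global maximizer over ℝ of θ ↦ f(Q G(i,j,θ)), and set Q' := Q G(i,j,θ*). Then |f(Q') − f(Q)| ≥ (√2 ε / 4) · ‖ProjGrad f(Q)‖ · ‖Q' − Q‖. -/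

import Mathlib

open Matrix Real Filter Set

attribute [local instance] Matrix.frobeniusNormedAddCommGroup Matrix.frobeniusNormedSpace

noncomputable def frobInner {n : ℕ} (A B : Matrix (Fin n) (Fin n) ℝ) : ℝ :=
  ∑ i, ∑ j, A i j * B i j

noncomputable def frobNorm {n : ℕ} (A : Matrix (Fin n) (Fin n) ℝ) : ℝ :=
  Real.sqrt (∑ i, ∑ j, (A i j) ^ 2)

def SOn (n : ℕ) : Set (Matrix (Fin n) (Fin n) ℝ) := {Q | Qᵀ * Q = 1 ∧ Q.det = 1}

noncomputable def grad {n : ℕ} (f : Matrix (Fin n) (Fin n) ℝ → ℝ)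
    (Q : Matrix (Fin n) (Fin n) ℝ) : Matrix (Fin n) (Fin n) ℝ :=
  Matrix.of fun k l => fderiv ℝ f Q (Matrix.single k l 1)

noncomputable def Lam {n : ℕ} (f : Matrix (Fin n) (Fin n) ℝ → ℝ)
    (Q : Matrix (Fin n) (Fin n) ℝ) : Matrix (Fin n) (Fin n) ℝ :=
  (1 / 2 : ℝ) • (Qᵀ * grad f Q - (grad f Q)ᵀ * Q)

noncomputable def projGrad {n : ℕ} (f : Matrix (Fin n) (Fin n) ℝ → ℝ)
    (Q : Matrix (Fin n) (Fin n) ℝ) : Matrix (Fin n) (Fin n) ℝ := Q * Lam f Q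

noncomputable def givens {n : ℕ} (i j : Fin n) (θ : ℝ) : Matrix (Fin n) (Fin n) ℝ :=
  Matrix.of fun k l =>
    if k = i ∧ l = i then Real.cos θ
    else if k = j ∧ l = j then Real.cos θ
    else if k = j ∧ l = i then Real.sin θ
    else if k = i ∧ l = j then -Real.sin θ
    else if k = l then 1 else 0

def deltaMat {n : ℕ} (i j : Fin n) : Matrix (Fin n) (Fin n) ℝ :=
  Matrix.of fun k l => if k = j ∧ l = i then 1 else if k = i ∧ l = j then -1 else 0

/-! ### Generic sum helpers -/

lemma sum_two_support {n : ℕ} {i j : Fin n} (hij : i ≠ j) (g : Fin n → ℝ)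
    (h : ∀ t, t ≠ i → t ≠ j → g t = 0) : ∑ t, g t = g i + g j := by
  have key : ∀ t, g t = (if t = i then g i else 0) + (if t = j then g j else 0) := by
    intro t
    by_cases h1 : t = i
    · subst h1; simp [hij]
    · by_cases h2 : t = j
      · subst h2; simp [h1]
      · simp [h1, h2, h t h1 h2]
  rw [Finset.sum_congr rfl (fun t _ => key t), Finset.sum_add_distrib]
  simp

/-! ### frobInner basics -/

lemma frobInner_eq_trace {n : ℕ} (A B : Matrix (Fin n) (Fin n) ℝ) :
    frobInner A B = Matrix.trace (Aᵀ * B) := by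
  simp [frobInner, Matrix.trace, Matrix.diag, Matrix.mul_apply, Matrix.transpose_apply]
  rw [Finset.sum_comm]

lemma frobInner_mul_left {n : ℕ} {Q : Matrix (Fin n) (Fin n) ℝ} (hQ : Qᵀ * Q = 1)
    (A B : Matrix (Fin n) (Fin n) ℝ) : frobInner (Q * A) (Q * B) = frobInner A B := by
  rw [frobInner_eq_trace, frobInner_eq_trace, Matrix.transpose_mul,
    Matrix.mul_assoc Aᵀ Qᵀ (Q * B), ← Matrix.mul_assoc Qᵀ Q B, hQ, Matrix.one_mul]

lemma frobNorm_eq_sqrt_inner {n : ℕ} (A : Matrix (Fin n) (Fin n) ℝ) :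
    frobNorm A = Real.sqrt (frobInner A A) := by
  simp [frobNorm, frobInner, sq]

lemma frobNorm_mul_left {n : ℕ} {Q : Matrix (Fin n) (Fin n) ℝ} (hQ : Qᵀ * Q = 1)
    (A : Matrix (Fin n) (Fin n) ℝ) : frobNorm (Q * A) = frobNorm A := by
  rw [frobNorm_eq_sqrt_inner, frobNorm_eq_sqrt_inner, frobInner_mul_left hQ]

lemma grad_inner {n : ℕ} (f : Matrix (Fin n) (Fin n) ℝ → ℝ)
    (Q H : Matrix (Fin n) (Fin n) ℝ) : frobInner (grad f Q) H = fderiv ℝ f Q H := by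
  have : H = ∑ k, ∑ l, Matrix.single k l (H k l) := Matrix.matrix_eq_sum_single H
  conv_rhs => rw [this]
  rw [map_sum]
  refine Finset.sum_congr rfl (fun k _ => ?_)
  rw [map_sum]
  refine Finset.sum_congr rfl (fun l _ => ?_)
  have h2 : Matrix.single k l (H k l) = (H k l) • Matrix.single k l 1 := by
    rw [Matrix.smul_single]; norm_num
  rw [h2, _root_.map_smul, smul_eq_mul, mul_comm]
  rfl

lemma deltaMat_transpose {n : ℕ} {i j : Fin n} (hij : i ≠ j) :
    (deltaMat i j)ᵀ = -(deltaMat i j) := by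
  ext k l
  simp only [deltaMat, Matrix.transpose_apply, Matrix.of_apply, Matrix.neg_apply]
  by_cases h1 : k = i <;> by_cases h2 : k = j <;> by_cases h3 : l = i <;> by_cases h4 : l = j <;>
    simp_all <;> simp_all [hij.symm]

lemma projGrad_inner {n : ℕ} {Q : Matrix (Fin n) (Fin n) ℝ} (hQ : Qᵀ * Q = 1)
    {i j : Fin n} (hij : i ≠ j) (f : Matrix (Fin n) (Fin n) ℝ → ℝ) :
    frobInner (projGrad f Q) (Q * deltaMat i j) = fderiv ℝ f Q (Q * deltaMat i j) := by
  have hδT := deltaMat_transpose hij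
  set G := grad f Q with hGdef
  set δ := deltaMat i j with hδdef
  have hLamT : (Lam f Q)ᵀ = (1/2 : ℝ) • (Gᵀ * Q - Qᵀ * G) := by
    rw [Lam, Matrix.transpose_smul, Matrix.transpose_sub, Matrix.transpose_mul,
      Matrix.transpose_mul, Matrix.transpose_transpose, Matrix.transpose_transpose]
  have hcyc : Matrix.trace ((Qᵀ * G) * δ) = - Matrix.trace ((Gᵀ * Q) * δ) := by
    have h0 : ((Qᵀ * G) * δ)ᵀ = -(δ * (Gᵀ * Q)) := by
      rw [Matrix.transpose_mul, hδT, Matrix.transpose_mul, Matrix.transpose_transpose,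
        Matrix.neg_mul]
    rw [← Matrix.trace_transpose ((Qᵀ * G) * δ), h0, Matrix.trace_neg, Matrix.trace_mul_comm]
  calc frobInner (projGrad f Q) (Q * δ) = frobInner (Lam f Q) δ := frobInner_mul_left hQ _ _
    _ = Matrix.trace ((Lam f Q)ᵀ * δ) := frobInner_eq_trace _ _
    _ = Matrix.trace ((Gᵀ * Q) * δ) := by
        rw [hLamT, Matrix.smul_mul, Matrix.trace_smul, Matrix.sub_mul, Matrix.trace_sub, hcyc]
        rw [smul_eq_mul]; ring
    _ = frobInner G (Q * δ) := by rw [frobInner_eq_trace, Matrix.mul_assoc]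
    _ = fderiv ℝ f Q (Q * δ) := grad_inner f Q (Q * δ)

/-! ### Differentiability -/

lemma differentiable_entry {n : ℕ} (a b : Fin n) :
    Differentiable ℝ (fun M : Matrix (Fin n) (Fin n) ℝ => M a b) := by
  let l : Matrix (Fin n) (Fin n) ℝ →ₗ[ℝ] ℝ :=
    { toFun := fun M => M a b, map_add' := fun _ _ => rfl, map_smul' := fun _ _ => rfl }
  exact l.toContinuousLinearMap.differentiable

lemma f_differentiable {n m : ℕ} (A : Fin m → Matrix (Fin n) (Fin n) ℝ) :
    Differentiable ℝ (fun M : Matrix (Fin n) (Fin n) ℝ =>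
      ∑ ℓ : Fin m, ∑ t, ((Mᵀ * A ℓ * M) t t) ^ 2) := by
  apply Differentiable.fun_sum; intro ℓ _
  apply Differentiable.fun_sum; intro t _
  have h : (fun M : Matrix (Fin n) (Fin n) ℝ => ((Mᵀ * A ℓ * M) t t) ^ 2)
      = fun M => (∑ k, (∑ a, M a t * (A ℓ) a k) * M k t) ^ 2 := by
    funext M; simp [Matrix.mul_apply, Matrix.transpose_apply]
  rw [h]
  apply Differentiable.pow
  apply Differentiable.fun_sum; intro k _
  exact (Differentiable.fun_sum fun a _ => (differentiable_entry a t).mul_const _).mul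
    (differentiable_entry k t)

/-! ### Givens structure -/

def cMat {n : ℕ} (i j : Fin n) : Matrix (Fin n) (Fin n) ℝ :=
  Matrix.of fun k l => if k = i ∧ l = i then 1 else if k = j ∧ l = j then 1 else 0
def eMat {n : ℕ} (i j : Fin n) : Matrix (Fin n) (Fin n) ℝ :=
  Matrix.of fun k l => if k = l ∧ k ≠ i ∧ k ≠ j then 1 else 0

lemma givens_decomp {n : ℕ} {i j : Fin n} (hij : i ≠ j) (θ : ℝ) :
    givens i j θ = Real.cos θ • cMat i j + Real.sin θ • deltaMat i j + eMat i j := by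
  ext k l
  simp only [givens, cMat, deltaMat, eMat, Matrix.add_apply, Matrix.smul_apply, Matrix.of_apply,
    smul_eq_mul]
  by_cases h1 : k = i <;> by_cases h2 : k = j <;> by_cases h3 : l = i <;> by_cases h4 : l = j <;>
    by_cases h5 : k = l <;> simp_all <;> ring

lemma givens_zero {n : ℕ} {i j : Fin n} (hij : i ≠ j) : givens i j (0 : ℝ) = 1 := by
  ext k l
  simp only [givens, Matrix.of_apply, Real.cos_zero, Real.sin_zero, Matrix.one_apply, neg_zero]
  by_cases h1 : k = i <;> by_cases h2 : k = j <;> by_cases h3 : l = i <;> by_cases h4 : l = j <;>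
    by_cases h5 : k = l <;> simp_all

lemma hasDerivAt_mul_givens {n : ℕ} {i j : Fin n} (hij : i ≠ j)
    (Q : Matrix (Fin n) (Fin n) ℝ) :
    HasDerivAt (fun θ : ℝ => Q * givens i j θ) (Q * deltaMat i j) 0 := by
  have h : (fun θ : ℝ => Q * givens i j θ)
      = fun θ : ℝ => Real.cos θ • (Q * cMat i j) + Real.sin θ • (Q * deltaMat i j)
        + Q * eMat i j := by
    funext θ
    rw [givens_decomp hij θ, Matrix.mul_add, Matrix.mul_add, Matrix.mul_smul, Matrix.mul_smul]
  rw [h]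
  have h1 := ((Real.hasDerivAt_cos 0).smul_const (Q * cMat i j)).add
    ((Real.hasDerivAt_sin 0).smul_const (Q * deltaMat i j))
  have h2 := h1.add_const (Q * eMat i j)
  have h3 : (-Real.sin 0 • (Q * cMat i j) + Real.cos 0 • (Q * deltaMat i j)) = Q * deltaMat i j := by
    simp
  rw [h3] at h2
  exact h2

/-! ### Trig identities -/

lemma cos_four (x : ℝ) : Real.cos (4 * x) = 1 - 8 * Real.sin x ^ 2 * Real.cos x ^ 2 := by
  rw [show (4 : ℝ) * x = 2 * (2 * x) by ring, Real.cos_two_mul, Real.cos_two_mul]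
  linear_combination (8 * Real.cos x ^ 2) * (Real.sin_sq_add_cos_sq x)

lemma sin_four (x : ℝ) : Real.sin (4 * x)
    = 4 * Real.sin x * Real.cos x * (Real.cos x ^ 2 - Real.sin x ^ 2) := by
  rw [show (4 : ℝ) * x = 2 * (2 * x) by ring, Real.sin_two_mul, Real.sin_two_mul,
    Real.cos_two_mul]
  linear_combination (4 * Real.sin x * Real.cos x) * (Real.sin_sq_add_cos_sq x)

lemma one_sub_cos (x : ℝ) : 1 - Real.cos x = 2 * Real.sin (x / 2) ^ 2 := by
  have h := Real.cos_two_mul (x / 2)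
  rw [show 2 * (x / 2) = x by ring] at h
  have h2 := Real.sin_sq_add_cos_sq (x / 2)
  linarith

/-! ### The key scalar identity -/

lemma scalar_identity (b e d c s : ℝ) (h : s ^ 2 + c ^ 2 = 1) :
    (c ^ 2 * b + 2 * c * s * d + s ^ 2 * e) ^ 2 + (s ^ 2 * b - 2 * c * s * d + c ^ 2 * e) ^ 2
      - b ^ 2 - e ^ 2
    = (((b - e) / 2) ^ 2 - d ^ 2) * (-(8 * s ^ 2 * c ^ 2))
      + 2 * ((b - e) / 2) * d * (4 * s * c * (c ^ 2 - s ^ 2)) := by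
  linear_combination ((b ^ 2 + e ^ 2) * (1 + s ^ 2 + c ^ 2)) * h

/-! ### Givens conjugation diagonal entries -/

section conj
variable {n : ℕ} {i j : Fin n} (B : Matrix (Fin n) (Fin n) ℝ) (θ : ℝ)

lemma givens_col_i (hij : i ≠ j) (a : Fin n) : givens i j θ a i
    = if a = i then Real.cos θ else if a = j then Real.sin θ else 0 := by
  by_cases h1 : a = i
  · subst h1; simp [givens]
  · by_cases h2 : a = j
    · subst h2; simp [givens, h1, hij, hij.symm]
    · simp [givens, h1, h2]

lemma givens_col_j (hij : i ≠ j) (a : Fin n) : givens i j θ a j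
    = if a = i then -Real.sin θ else if a = j then Real.cos θ else 0 := by
  by_cases h1 : a = i
  · subst h1; simp [givens, hij, hij.symm]
  · by_cases h2 : a = j
    · subst h2; simp [givens, h1, hij, hij.symm]
    · simp [givens, h1, h2]

lemma givens_col_other (t : Fin n) (ht1 : t ≠ i) (ht2 : t ≠ j) (a : Fin n) :
    givens i j θ a t = if a = t then 1 else 0 := by
  simp [givens, ht1, ht2]

lemma givens_conj_offdiag (t : Fin n) (ht1 : t ≠ i) (ht2 : t ≠ j) :
    ((givens i j θ)ᵀ * B * givens i j θ) t t = B t t := by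
  simp only [Matrix.mul_apply, Matrix.transpose_apply]
  have h1 : ∀ k : Fin n, (∑ a, givens i j θ a t * B a k) = B t k := by
    intro k
    simp [givens_col_other (i := i) (j := j) θ t ht1 ht2, ite_mul, Finset.sum_ite_eq']
  calc (∑ k, (∑ a, givens i j θ a t * B a k) * givens i j θ k t)
      = ∑ k, B t k * givens i j θ k t := by
        exact Finset.sum_congr rfl (fun k _ => by rw [h1 k])
    _ = B t t := by
        simp [givens_col_other (i := i) (j := j) θ t ht1 ht2, mul_ite, Finset.sum_ite_eq']

lemma givens_conj_ii (hij : i ≠ j) (hB : Bᵀ = B) :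
    ((givens i j θ)ᵀ * B * givens i j θ) i i
      = Real.cos θ ^ 2 * B i i + 2 * Real.cos θ * Real.sin θ * B i j
        + Real.sin θ ^ 2 * B j j := by
  have hBs : B j i = B i j := by
    have := congrFun (congrFun hB j) i
    simpa [Matrix.transpose_apply] using this.symm
  simp only [Matrix.mul_apply, Matrix.transpose_apply]
  have h1 : ∀ k : Fin n, (∑ a, givens i j θ a i * B a k)
      = Real.cos θ * B i k + Real.sin θ * B j k := by
    intro k
    rw [sum_two_support hij (fun a => givens i j θ a i * B a k)
      (fun a ha hb => by simp only [givens_col_i θ hij]; simp [ha, hb])]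
    simp only [givens_col_i θ hij]
    simp [hij.symm]
  calc (∑ k, (∑ a, givens i j θ a i * B a k) * givens i j θ k i)
      = ∑ k, (Real.cos θ * B i k + Real.sin θ * B j k) * givens i j θ k i :=
        Finset.sum_congr rfl (fun k _ => by rw [h1 k])
    _ = (Real.cos θ * B i i + Real.sin θ * B j i) * Real.cos θ
        + (Real.cos θ * B i j + Real.sin θ * B j j) * Real.sin θ := by
        rw [sum_two_support hij _ (fun k ha hb => by simp only [givens_col_i θ hij]; simp [ha, hb])]
        simp only [givens_col_i θ hij]
        simp [hij.symm]
    _ = _ := by rw [hBs]; ring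

lemma givens_conj_jj (hij : i ≠ j) (hB : Bᵀ = B) :
    ((givens i j θ)ᵀ * B * givens i j θ) j j
      = Real.sin θ ^ 2 * B i i - 2 * Real.cos θ * Real.sin θ * B i j
        + Real.cos θ ^ 2 * B j j := by
  have hBs : B j i = B i j := by
    have := congrFun (congrFun hB j) i
    simpa [Matrix.transpose_apply] using this.symm
  simp only [Matrix.mul_apply, Matrix.transpose_apply]
  have h1 : ∀ k : Fin n, (∑ a, givens i j θ a j * B a k)
      = -Real.sin θ * B i k + Real.cos θ * B j k := by
    intro k
    rw [sum_two_support hij (fun a => givens i j θ a j * B a k)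
      (fun a ha hb => by simp only [givens_col_j θ hij]; simp [ha, hb])]
    simp only [givens_col_j θ hij]
    simp [hij.symm]
  calc (∑ k, (∑ a, givens i j θ a j * B a k) * givens i j θ k j)
      = ∑ k, (-Real.sin θ * B i k + Real.cos θ * B j k) * givens i j θ k j :=
        Finset.sum_congr rfl (fun k _ => by rw [h1 k])
    _ = (-Real.sin θ * B i i + Real.cos θ * B j i) * (-Real.sin θ)
        + (-Real.sin θ * B i j + Real.cos θ * B j j) * Real.cos θ := by
        rw [sum_two_support hij _ (fun k ha hb => by simp only [givens_col_j θ hij]; simp [ha, hb])]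
        simp only [givens_col_j θ hij]
        simp [hij.symm]
    _ = _ := by rw [hBs]; ring

end conj

/-! ### The master value formula -/

lemma fval {n mm : ℕ} (A : Fin mm → Matrix (Fin n) (Fin n) ℝ) (hA : ∀ ℓ, (A ℓ)ᵀ = A ℓ)
    (Q : Matrix (Fin n) (Fin n) ℝ) {i j : Fin n} (hij : i ≠ j) (θ : ℝ) :
    (∑ ℓ : Fin mm, ∑ t, (((Q * givens i j θ)ᵀ * A ℓ * (Q * givens i j θ)) t t) ^ 2)
    = (∑ ℓ : Fin mm, ∑ t, ((Qᵀ * A ℓ * Q) t t) ^ 2)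
      + (∑ ℓ : Fin mm, ((((Qᵀ * A ℓ * Q) i i - (Qᵀ * A ℓ * Q) j j) / 2) ^ 2
          - ((Qᵀ * A ℓ * Q) i j) ^ 2)) * (Real.cos (4 * θ) - 1)
      + (∑ ℓ : Fin mm, 2 * (((Qᵀ * A ℓ * Q) i i - (Qᵀ * A ℓ * Q) j j) / 2)
          * ((Qᵀ * A ℓ * Q) i j)) * Real.sin (4 * θ) := by
  rw [Finset.sum_mul, Finset.sum_mul, ← Finset.sum_add_distrib, ← Finset.sum_add_distrib]
  refine Finset.sum_congr rfl (fun ℓ _ => ?_)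
  have hB : (Qᵀ * A ℓ * Q)ᵀ = Qᵀ * A ℓ * Q := by
    rw [Matrix.transpose_mul, Matrix.transpose_mul, Matrix.transpose_transpose, hA ℓ,
      Matrix.mul_assoc]
  have hconj : (Q * givens i j θ)ᵀ * A ℓ * (Q * givens i j θ)
      = (givens i j θ)ᵀ * (Qᵀ * A ℓ * Q) * givens i j θ := by
    rw [Matrix.transpose_mul]
    simp only [Matrix.mul_assoc]
  rw [hconj]
  set B := Qᵀ * A ℓ * Q with hBdef
  set G := (givens i j θ)ᵀ * B * givens i j θ with hGdef
  have hdiff : ∑ t, ((G t t) ^ 2 - (B t t) ^ 2)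
      = ((G i i) ^ 2 - (B i i) ^ 2) + ((G j j) ^ 2 - (B j j) ^ 2) := by
    refine sum_two_support hij _ (fun t h1 h2 => ?_)
    show (G t t) ^ 2 - (B t t) ^ 2 = 0
    rw [hGdef, givens_conj_offdiag B θ t h1 h2]
    ring
  rw [Finset.sum_sub_distrib] at hdiff
  have hii := givens_conj_ii B θ hij hB
  have hjj := givens_conj_jj B θ hij hB
  rw [← hGdef] at hii hjj
  have hkey := scalar_identity (B i i) (B j j) (B i j) (Real.cos θ) (Real.sin θ)
    (Real.sin_sq_add_cos_sq θ)
  rw [cos_four, sin_four]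
  have hgii : G i i = Real.cos θ ^ 2 * B i i + 2 * Real.cos θ * Real.sin θ * B i j
      + Real.sin θ ^ 2 * B j j := hii
  have hgjj : G j j = Real.sin θ ^ 2 * B i i - 2 * Real.cos θ * Real.sin θ * B i j
      + Real.cos θ ^ 2 * B j j := hjj
  have : ∑ t, (G t t) ^ 2 = ∑ t, (B t t) ^ 2
      + (((G i i) ^ 2 - (B i i) ^ 2) + ((G j j) ^ 2 - (B j j) ^ 2)) := by linarith
  rw [this, hgii, hgjj]
  nlinarith [hkey]

/-! ### Norm of the Givens increment -/

lemma frobNorm_givens_sub {n : ℕ} {Q : Matrix (Fin n) (Fin n) ℝ} (hQ1 : Qᵀ * Q = 1)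
    {i j : Fin n} (hij : i ≠ j) (θ : ℝ) :
    frobNorm (Q * givens i j θ - Q) = Real.sqrt 8 * |Real.sin (θ / 2)| := by
  have h1 : Q * givens i j θ - Q = Q * (givens i j θ - 1) := by
    rw [Matrix.mul_sub, Matrix.mul_one]
  rw [h1, frobNorm_mul_left hQ1, frobNorm]
  have hent : ∀ k l, (givens i j θ - 1) k l
      = (if k = i ∧ l = i then Real.cos θ - 1
        else if k = j ∧ l = j then Real.cos θ - 1
        else if k = j ∧ l = i then Real.sin θ
        else if k = i ∧ l = j then -Real.sin θ else 0) := by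
    intro k l
    simp only [Matrix.sub_apply, givens, Matrix.one_apply, Matrix.of_apply]
    by_cases h1 : k = i <;> by_cases h2 : k = j <;> by_cases h3 : l = i <;> by_cases h4 : l = j <;>
      by_cases h5 : k = l <;> simp_all
  have hrowsum : ∀ k, k ≠ i → k ≠ j → (∑ l, ((givens i j θ - 1) k l) ^ 2) = 0 := by
    intro k h1 h2
    refine Finset.sum_eq_zero (fun l _ => ?_)
    rw [hent k l]
    simp [h1, h2]
  have houter : (∑ k, ∑ l, ((givens i j θ - 1) k l) ^ 2)
      = (∑ l, ((givens i j θ - 1) i l) ^ 2) + (∑ l, ((givens i j θ - 1) j l) ^ 2) :=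
    sum_two_support hij _ (fun k h1 h2 => hrowsum k h1 h2)
  have hrowi : (∑ l, ((givens i j θ - 1) i l) ^ 2) = (Real.cos θ - 1) ^ 2 + Real.sin θ ^ 2 := by
    rw [sum_two_support hij _ (fun l h1 h2 => by rw [hent i l]; simp [h1, h2])]
    rw [hent i i, hent i j]
    simp [hij, hij.symm]
  have hrowj : (∑ l, ((givens i j θ - 1) j l) ^ 2) = Real.sin θ ^ 2 + (Real.cos θ - 1) ^ 2 := by
    rw [sum_two_support hij _ (fun l h1 h2 => by rw [hent j l]; simp [h1, h2])]
    rw [hent j i, hent j j]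
    simp [hij, hij.symm]
  have hval : (∑ k, ∑ l, ((givens i j θ - 1) k l) ^ 2) = 8 * Real.sin (θ / 2) ^ 2 := by
    rw [houter, hrowi, hrowj]
    have h2 := one_sub_cos θ
    have h3 := Real.sin_sq_add_cos_sq θ
    nlinarith
  rw [hval, show (8 : ℝ) * Real.sin (θ / 2) ^ 2 = 8 * (Real.sin (θ / 2) ^ 2) by ring,
    Real.sqrt_mul (by norm_num : (0:ℝ) ≤ 8), Real.sqrt_sq_eq_abs]

/-! ### The trigonometric inequality -/

lemma trig_ineq {x : ℝ} (h1 : -(π / 4) ≤ x) (h2 : x ≤ π / 4) :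
    4 * |Real.sin (4 * x)| * |Real.sin (x / 2)| ≤ 1 - Real.cos (4 * x) := by
  have hπ := Real.pi_pos
  wlog hx : 0 ≤ x generalizing x
  · push_neg at hx
    have := this (x := -x) (by linarith) (by linarith) (by linarith)
    simpa [Real.sin_neg, Real.cos_neg, abs_neg, neg_div, mul_neg, neg_mul] using this
  have hs4 : 0 ≤ Real.sin (4 * x) :=
    Real.sin_nonneg_of_nonneg_of_le_pi (by linarith) (by linarith)
  have hsh : 0 ≤ Real.sin (x / 2) :=
    Real.sin_nonneg_of_nonneg_of_le_pi (by linarith) (by linarith)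
  rw [abs_of_nonneg hs4, abs_of_nonneg hsh]
  have e1 : Real.sin (4 * x) = 2 * Real.sin (2 * x) * Real.cos (2 * x) := by
    rw [show (4 : ℝ) * x = 2 * (2 * x) by ring, Real.sin_two_mul]
  have e2 : 1 - Real.cos (4 * x) = 2 * Real.sin (2 * x) ^ 2 := by
    rw [one_sub_cos (4 * x), show (4 * x) / 2 = 2 * x by ring]
  have esin : Real.sin x = 2 * Real.sin (x / 2) * Real.cos (x / 2) := by
    have := Real.sin_two_mul (x / 2)
    rw [show 2 * (x / 2) = x by ring] at this
    linarith
  have e3 : Real.sin (2 * x) = 4 * Real.sin (x / 2) * Real.cos (x / 2) * Real.cos x := by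
    rw [Real.sin_two_mul, esin]; ring
  have hcx : 0 ≤ Real.cos x := Real.cos_nonneg_of_mem_Icc ⟨by linarith, by linarith⟩
  have hch : 0 ≤ Real.cos (x / 2) := Real.cos_nonneg_of_mem_Icc ⟨by linarith, by linarith⟩
  have hmono : Real.cos x ≤ Real.cos (x / 2) :=
    Real.cos_le_cos_of_nonneg_of_le_pi (by linarith) (by linarith) (by linarith)
  have h2x : Real.cos (2 * x) ≤ Real.cos (x / 2) * Real.cos x := by
    have hc2 : Real.cos (2 * x) = 2 * Real.cos x ^ 2 - 1 := Real.cos_two_mul x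
    nlinarith [Real.cos_le_one x]
  rw [e1, e2, e3]
  nlinarith [mul_le_mul_of_nonneg_left h2x
    (mul_nonneg (mul_nonneg (mul_nonneg hsh hsh) hch) hcx), sq_nonneg (Real.sin (x/2))]


set_option maxHeartbeats 1000000 in
theorem stmt_12 {n m : ℕ} (hn : 2 ≤ n) (A : Fin m → Matrix (Fin n) (Fin n) ℝ)
    (hA : ∀ ℓ, (A ℓ)ᵀ = A ℓ)
    (f : Matrix (Fin n) (Fin n) ℝ → ℝ)
    (hf : ∀ Q, f Q = ∑ ℓ : Fin m, ∑ j, ((Qᵀ * A ℓ * Q) j j) ^ 2)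
    (ε : ℝ) (hε : 0 < ε)
    (Q : Matrix (Fin n) (Fin n) ℝ) (hQ : Q ∈ SOn n) (i j : Fin n) (hij : i < j)
    (hgrad : ε * frobNorm (projGrad f Q) ≤ |frobInner (projGrad f Q) (Q * deltaMat i j)|)
    (θ : ℝ) (hθ : θ ∈ Set.Icc (-(π / 4)) (π / 4))
    (hmax : ∀ θ' : ℝ, f (Q * givens i j θ') ≤ f (Q * givens i j θ))
    (Q' : Matrix (Fin n) (Fin n) ℝ) (hQ' : Q' = Q * givens i j θ) :
    Real.sqrt 2 * ε / 4 * frobNorm (projGrad f Q) * frobNorm (Q' - Q) ≤ |f Q' - f Q| := by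
  have hij' : i ≠ j := Fin.ne_of_lt hij
  obtain ⟨hQ1, _⟩ := hQ
  have hPnn : 0 ≤ frobNorm (projGrad f Q) := Real.sqrt_nonneg _
  set α := ∑ ℓ : Fin m, ((((Qᵀ * A ℓ * Q) i i - (Qᵀ * A ℓ * Q) j j) / 2) ^ 2
      - ((Qᵀ * A ℓ * Q) i j) ^ 2) with hα
  set β := ∑ ℓ : Fin m, 2 * (((Qᵀ * A ℓ * Q) i i - (Qᵀ * A ℓ * Q) j j) / 2)
      * ((Qᵀ * A ℓ * Q) i j) with hβ
  have hval : ∀ φ : ℝ, f (Q * givens i j φ)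
      = f Q + α * (Real.cos (4 * φ) - 1) + β * Real.sin (4 * φ) := by
    intro φ
    rw [hf, hf, fval A hA Q hij' φ, ← hα, ← hβ]
  have hfd : DifferentiableAt ℝ f Q := by
    have hfe : f = fun M => ∑ ℓ : Fin m, ∑ t, ((Mᵀ * A ℓ * M) t t) ^ 2 := funext hf
    rw [hfe]
    exact (f_differentiable A).differentiableAt
  have hchain : HasDerivAt (fun φ : ℝ => f (Q * givens i j φ))
      (fderiv ℝ f Q (Q * deltaMat i j)) 0 := by
    have h1 := hasDerivAt_mul_givens hij' Q
    have h2 := hfd.hasFDerivAt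
    have h3 : Q * givens i j (0 : ℝ) = Q := by rw [givens_zero hij', Matrix.mul_one]
    have h4 := h2.comp_hasDerivAt_of_eq 0 h1 h3.symm
    exact h4
  have hexp : HasDerivAt (fun φ : ℝ => f Q + α * (Real.cos (4 * φ) - 1) + β * Real.sin (4 * φ))
      (4 * β) 0 := by
    have hid : HasDerivAt (fun φ : ℝ => 4 * φ) 4 0 := by
      simpa using (hasDerivAt_id (0:ℝ)).const_mul (4:ℝ)
    have hc : HasDerivAt (fun φ : ℝ => Real.cos (4 * φ)) (-Real.sin (4 * 0) * 4) 0 :=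
      (Real.hasDerivAt_cos (4 * 0)).comp 0 hid
    have hs : HasDerivAt (fun φ : ℝ => Real.sin (4 * φ)) (Real.cos (4 * 0) * 4) 0 :=
      (Real.hasDerivAt_sin (4 * 0)).comp 0 hid
    have h4 := (((hc.sub_const 1).const_mul α).const_add (f Q)).add (hs.const_mul β)
    have h5 : α * (-Real.sin (4 * 0) * 4) + β * (Real.cos (4 * 0) * 4) = 4 * β := by
      norm_num
      ring
    rw [h5] at h4
    exact h4
  have hder : fderiv ℝ f Q (Q * deltaMat i j) = 4 * β := by
    have hfun : (fun φ : ℝ => f (Q * givens i j φ))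
        = fun φ => f Q + α * (Real.cos (4 * φ) - 1) + β * Real.sin (4 * φ) := funext hval
    rw [hfun] at hchain
    exact hchain.unique hexp
  have hinner : frobInner (projGrad f Q) (Q * deltaMat i j) = 4 * β := by
    rw [projGrad_inner hQ1 hij' f, hder]
  set r := Real.sqrt (α ^ 2 + β ^ 2) with hr
  have hr0 : 0 ≤ r := Real.sqrt_nonneg _
  have hr2 : r ^ 2 = α ^ 2 + β ^ 2 := Real.sq_sqrt (by positivity)
  set c4 := Real.cos (4 * θ) with hc4
  set s4 := Real.sin (4 * θ) with hs4
  have hpyth : s4 ^ 2 + c4 ^ 2 = 1 := Real.sin_sq_add_cos_sq (4 * θ)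
  have hCS : (α * c4 + β * s4) ^ 2 ≤ r ^ 2 := by
    nlinarith [sq_nonneg (α * s4 - β * c4), hpyth, hr2]
  have hub : α * c4 + β * s4 ≤ r := by nlinarith [hCS, hr0]
  have hlb : r ≤ α * c4 + β * s4 := by
    rcases eq_or_lt_of_le hr0 with h0 | hpos
    · have hz : α ^ 2 + β ^ 2 = 0 := by rw [← hr2, ← h0]; norm_num
      have hα0 : α = 0 := by nlinarith
      have hβ0 : β = 0 := by nlinarith
      rw [hα0, hβ0, ← h0]
      norm_num
    · set z : ℂ := ⟨α, β⟩ with hz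
      have hz0 : z ≠ 0 := by
        intro h
        have ha : α = 0 := by simpa using congrArg Complex.re h
        have hb : β = 0 := by simpa using congrArg Complex.im h
        rw [ha, hb] at hr2
        nlinarith
      have habs : ‖z‖ = r := by
        rw [Complex.norm_def, Complex.normSq_mk, hr]
        congr 1
        ring
      have hcos := Complex.cos_arg hz0
      have hsin := Complex.sin_arg z
      have hre : z.re = α := rfl
      have him : z.im = β := rfl
      have hrne : r ≠ 0 := ne_of_gt hpos
      have hmaxed : α * Real.cos (Complex.arg z) + β * Real.sin (Complex.arg z) = r := by
        rw [hcos, hsin, habs, hre, him]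
        field_simp
        first
        | linear_combination hr2
        | linear_combination -hr2
        | linear_combination r * hr2
        | linear_combination -r * hr2
        | ring
      have hφ := hmax (Complex.arg z / 4)
      rw [hval, hval, show 4 * (Complex.arg z / 4) = Complex.arg z by ring] at hφ
      rw [← hc4, ← hs4] at hφ
      linarith [hφ, hmaxed]
  have heq : α * c4 + β * s4 = r := le_antisymm hub hlb
  have hzero : (α - r * c4) ^ 2 + (β - r * s4) ^ 2 = 0 := by
    linear_combination (-1 : ℝ) * hr2 + r ^ 2 * hpyth + (-2 * r) * heq
  have hαe : α = r * c4 := by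
    have h1 : (α - r * c4) ^ 2 = 0 := by nlinarith [sq_nonneg (α - r * c4), sq_nonneg (β - r * s4)]
    have := sq_eq_zero_iff.mp h1
    linarith
  have hβe : β = r * s4 := by
    have h1 : (β - r * s4) ^ 2 = 0 := by nlinarith [sq_nonneg (α - r * c4), sq_nonneg (β - r * s4)]
    have := sq_eq_zero_iff.mp h1
    linarith
  have hfQ' : f Q' - f Q = r * (1 - c4) := by
    rw [hQ', hval θ, ← hc4, ← hs4]
    linear_combination heq - hαe
  have hc41 : c4 ≤ 1 := Real.cos_le_one _
  have habs' : |f Q' - f Q| = r * (1 - c4) := by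
    rw [hfQ']
    exact abs_of_nonneg (by nlinarith)
  have hnorm : frobNorm (Q' - Q) = Real.sqrt 8 * |Real.sin (θ / 2)| := by
    rw [hQ']
    exact frobNorm_givens_sub hQ1 hij' θ
  have hg2 : ε * frobNorm (projGrad f Q) ≤ 4 * r * |s4| := by
    rw [hinner] at hgrad
    calc ε * frobNorm (projGrad f Q) ≤ |4 * β| := hgrad
      _ = 4 * r * |s4| := by
          rw [hβe, abs_mul, abs_mul, abs_of_nonneg hr0]
          norm_num
          ring
  have htrig : 4 * |s4| * |Real.sin (θ / 2)| ≤ 1 - c4 := trig_ineq hθ.1 hθ.2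
  rw [habs', hnorm]
  have hsqrt : Real.sqrt 2 * Real.sqrt 8 = 4 := by
    rw [← Real.sqrt_mul (by norm_num : (0:ℝ) ≤ 2)]
    rw [show (2 : ℝ) * 8 = 16 by norm_num, show (16 : ℝ) = 4 ^ 2 by norm_num,
      Real.sqrt_sq (by norm_num : (0:ℝ) ≤ 4)]
  have step1 : Real.sqrt 2 * ε / 4 * frobNorm (projGrad f Q) * (Real.sqrt 8 * |Real.sin (θ / 2)|)
      = ε * frobNorm (projGrad f Q) * |Real.sin (θ / 2)| * (Real.sqrt 2 * Real.sqrt 8 / 4) := by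
    ring
  rw [step1, hsqrt]
  norm_num
  calc ε * frobNorm (projGrad f Q) * |Real.sin (θ / 2)|
      ≤ 4 * r * |s4| * |Real.sin (θ / 2)| :=
        mul_le_mul_of_nonneg_right hg2 (abs_nonneg _)
    _ = r * (4 * |s4| * |Real.sin (θ / 2)|) := by ring
    _ ≤ r * (1 - c4) := mul_le_mul_of_nonneg_left htrig hr0
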